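/- For each nonzero u in F_p, the Kloosterman sum over F_q satisfies K^{(m)}(u) = T_{00} - 2·T_{01} + Σ_{s=1}^{p-1} K(us)·T_{1s}, where K is the Kloosterman sum over F_p; equivalently, Σ_{s=1}^{p-1} (K(us) + p + 1)·T_{1s} = K^{(m)}(u) + q + 1. -/

import Mathlib

open Finset

/-- The Kloosterman sum over the prime field `F_p`. -/
noncomputable def kloosterman (p : ℕ) [Fact p.Prime] (u : ZMod p) : ℂ :=
  ∑ x ∈ (Finset.univ \ {0} : Finset (ZMod p)),
    Complex.exp (2 * Real.pi * Complex.I * ((x + u * x⁻¹).val : ℂ) / p)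

/-- The Kloosterman sum over the extension field `F = F_q`, `q = p^m`, at `u ∈ F_p`. -/
noncomputable def kloostermanExt (p : ℕ) [Fact p.Prime] (F : Type*) [Field F] [Fintype F]
    [DecidableEq F] [Algebra (ZMod p) F] (u : ZMod p) : ℂ :=
  ∑ x ∈ (Finset.univ \ {0} : Finset F),
    Complex.exp (2 * Real.pi * Complex.I *
      ((Algebra.trace (ZMod p) F (x + algebraMap (ZMod p) F u * x⁻¹)).val : ℂ) / p)

namespace KlAux

variable (p : ℕ) [Fact p.Prime] (F : Type*) [Field F] [Fintype F]
    [DecidableEq F] [Algebra (ZMod p) F]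

/-- abbreviation for the trace -/
noncomputable def tr (x : F) : ZMod p := Algebra.trace (ZMod p) F x

/-- The fiber counts `T_{ij}`. -/
noncomputable def T (i j : ZMod p) : ℕ :=
  ((univ : Finset F).filter (fun x => x ≠ 0 ∧ tr p F x = i ∧ tr p F x⁻¹ = j)).card

lemma natCard_eq_T (i j : ZMod p) :
    Nat.card {x : F | x ≠ 0 ∧ Algebra.trace (ZMod p) F x = i ∧
      Algebra.trace (ZMod p) F x⁻¹ = j} = T p F i j := by
  rw [Nat.card_eq_fintype_card]
  convert Fintype.card_subtype (fun x : F =>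
    x ≠ 0 ∧ tr p F x = i ∧ tr p F x⁻¹ = j) using 2
  all_goals rfl

lemma tr_smul (c : ZMod p) (x : F) :
    tr p F (algebraMap (ZMod p) F c * x) = c * tr p F x := by
  rw [tr, tr, ← Algebra.smul_def, map_smul, smul_eq_mul]

lemma tr_add (x y : F) : tr p F (x + y) = tr p F x + tr p F y := map_add _ x y

lemma tr_zero : tr p F 0 = 0 := map_zero _

/-- symmetry via inversion -/
lemma T_symm (i j : ZMod p) : T p F i j = T p F j i := by
  unfold T
  refine Finset.card_bij' (fun x _ => x⁻¹) (fun x _ => x⁻¹) ?_ ?_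
    (fun a _ => inv_inv a) (fun a _ => inv_inv a) <;>
    simp only [mem_filter, mem_univ, true_and]
  · rintro a ⟨h0, h1, h2⟩
    exact ⟨inv_ne_zero h0, h2, by rwa [inv_inv]⟩
  · rintro a ⟨h0, h1, h2⟩
    exact ⟨inv_ne_zero h0, h2, by rwa [inv_inv]⟩

/-- scaling -/
lemma T_scale (c : ZMod p) (hc : c ≠ 0) (i j : ZMod p) :
    T p F i j = T p F (c * i) (c⁻¹ * j) := by
  unfold T
  have hc0 : (algebraMap (ZMod p) F) c ≠ 0 := by
    simpa using hc
  have hc0' : (algebraMap (ZMod p) F) c⁻¹ ≠ 0 := by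
    simpa using inv_ne_zero hc
  refine Finset.card_bij' (fun x _ => algebraMap (ZMod p) F c * x)
    (fun x _ => algebraMap (ZMod p) F c⁻¹ * x) ?_ ?_ ?_ ?_ <;>
    simp only [mem_filter, mem_univ, true_and]
  · rintro a ⟨h0, h1, h2⟩
    refine ⟨mul_ne_zero hc0 h0, by rw [tr_smul, h1], ?_⟩
    rw [mul_inv, ← map_inv₀, tr_smul, h2]
  · rintro a ⟨h0, h1, h2⟩
    refine ⟨mul_ne_zero hc0' h0, ?_, ?_⟩
    · rw [tr_smul, h1, ← mul_assoc, inv_mul_cancel₀ hc, one_mul]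
    · rw [mul_inv, ← map_inv₀, tr_smul, h2, inv_inv, ← mul_assoc,
        mul_inv_cancel₀ hc, one_mul]
  · intro a _
    rw [← mul_assoc, ← map_mul, inv_mul_cancel₀ hc, map_one, one_mul]
  · intro a _
    rw [← mul_assoc, ← map_mul, mul_inv_cancel₀ hc, map_one, one_mul]

lemma T_row (i j : ZMod p) (hi : i ≠ 0) : T p F i j = T p F 1 (i * j) := by
  have := T_scale p F i⁻¹ (inv_ne_zero hi) i j
  rwa [inv_mul_cancel₀ hi, inv_inv] at this

lemma T_zero_col (j : ZMod p) (hj : j ≠ 0) : T p F 0 j = T p F 0 1 := by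
  have := T_scale p F j hj 0 j
  rwa [mul_zero, inv_mul_cancel₀ hj] at this

lemma T_col_zero (i : ZMod p) (hi : i ≠ 0) : T p F i 0 = T p F 0 1 := by
  rw [T_symm, T_zero_col p F i hi]

/-- The master fiberwise decomposition. -/
lemma sum_fiber (g : ZMod p → ZMod p → ℂ) :
    ∑ x ∈ (univ \ {0} : Finset F), g (tr p F x) (tr p F x⁻¹)
      = ∑ i : ZMod p, ∑ j : ZMod p, (T p F i j : ℂ) * g i j := by
  rw [← Finset.sum_fiberwise (univ \ {0} : Finset F)
    (fun x => (tr p F x, tr p F x⁻¹)) (fun x => g (tr p F x) (tr p F x⁻¹)),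
    ← Fintype.sum_prod_type']
  refine Finset.sum_congr rfl fun ij _ => ?_
  rw [show ∑ x ∈ (univ \ {0} : Finset F).filter
      (fun x => (tr p F x, tr p F x⁻¹) = ij), g (tr p F x) (tr p F x⁻¹)
    = ∑ x ∈ (univ \ {0} : Finset F).filter
      (fun x => (tr p F x, tr p F x⁻¹) = ij), g ij.1 ij.2 from
    Finset.sum_congr rfl fun x hx => by
      have := (mem_filter.mp hx).2
      rw [← this]]
  rw [Finset.sum_const, nsmul_eq_mul]
  congr 2
  unfold T
  congr 1
  ext x
  simp [Prod.ext_iff, and_assoc, and_comm, eq_comm]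

/-- values of the standard additive character -/
lemma psi_apply (a : ZMod p) :
    ZMod.stdAddChar a = Complex.exp (2 * Real.pi * Complex.I * (a.val : ℂ) / p) := by
  rw [ZMod.stdAddChar_apply, ZMod.toCircle_apply]

lemma sum_psi_sdiff {v : ZMod p} (hv : v ≠ 0) :
    ∑ a ∈ (univ \ {0} : Finset (ZMod p)), ZMod.stdAddChar (v * a) = -1 := by
  have htot : ∑ a : ZMod p, ZMod.stdAddChar (v * a) = 0 := by
    have h := (ZMod.isPrimitive_stdAddChar p) hv
    have := AddChar.sum_eq_zero_of_ne_one h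
    simpa [AddChar.mulShift_apply, mul_comm] using this
  have hsplit : ∑ a : ZMod p, ZMod.stdAddChar (v * a)
      = ZMod.stdAddChar (v * 0) + ∑ a ∈ (univ \ {0} : Finset (ZMod p)),
        ZMod.stdAddChar (v * a) := by
    rw [Finset.sdiff_singleton_eq_erase,
      ← Finset.add_sum_erase _ (fun a => ZMod.stdAddChar (v * a)) (mem_univ 0)]
  rw [htot] at hsplit
  simp only [mul_zero, AddChar.map_zero_eq_one] at hsplit
  linear_combination -hsplit

lemma split_sum (f : ZMod p → ℂ) :
    ∑ i : ZMod p, f i = f 0 + ∑ i ∈ (univ \ {0} : Finset (ZMod p)), f i := by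
  rw [Finset.sdiff_singleton_eq_erase, ← Finset.add_sum_erase _ f (mem_univ 0)]

lemma kloosterman_eq (v : ZMod p) :
    kloosterman p v = ∑ x ∈ (univ \ {0} : Finset (ZMod p)),
      ZMod.stdAddChar (x + v * x⁻¹) := by
  unfold kloosterman
  exact Finset.sum_congr rfl fun x _ => (psi_apply p _).symm

/-- The kernel-size constant. -/
noncomputable def K0 : ℕ := ((univ : Finset F).filter (fun x => tr p F x = (0 : ZMod p))).card

lemma fiber_card (c : ZMod p) :
    ((univ : Finset F).filter (fun x => tr p F x = c)).card = K0 p F := by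
  have : FiniteDimensional (ZMod p) F := Module.Finite.of_finite
  obtain ⟨x₀, hx₀⟩ := Algebra.trace_surjective (ZMod p) F c
  have hx₀' : tr p F x₀ = c := hx₀
  unfold K0
  refine Finset.card_nbij' (fun x => x - x₀) (fun x => x + x₀) ?_ ?_ ?_ ?_ <;>
    simp only [Set.MapsTo, Set.LeftInvOn, Set.RightInvOn, mem_coe, mem_filter, mem_univ,
      true_and]
  · intro a ha; rw [tr, map_sub, ← tr, ← tr, ha, hx₀', sub_self]
  · intro a ha; rw [tr, map_add, ← tr, ← tr, ha, hx₀', zero_add]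
  · intro a _; rw [sub_add_cancel]
  · intro a _; rw [add_sub_cancel_right]

lemma mul_K0 : p * K0 p F = Fintype.card F := by
  have h := Finset.card_eq_sum_card_fiberwise
    (f := fun x : F => tr p F x) (s := univ) (t := univ) (fun x _ => mem_univ _)
  rw [Finset.card_univ] at h
  rw [h]
  rw [Finset.sum_congr rfl (fun c _ => fiber_card p F c), Finset.sum_const,
    Finset.card_univ, ZMod.card, smul_eq_mul]

lemma row_one_sum : ∑ j : ZMod p, T p F 1 j = K0 p F := by
  rw [← fiber_card p F 1]
  have h := Finset.card_eq_sum_card_fiberwise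
    (f := fun x : F => tr p F x⁻¹)
    (s := (univ : Finset F).filter (fun x => tr p F x = 1)) (t := univ)
    (fun x _ => mem_univ _)
  rw [h]
  refine (Finset.sum_congr rfl fun j _ => ?_).symm
  rw [Finset.filter_filter]
  unfold T
  congr 1
  ext x
  simp only [mem_filter, mem_univ, true_and]
  constructor
  · rintro ⟨h1, h2⟩
    refine ⟨?_, h1, h2⟩
    rintro rfl
    rw [tr_zero] at h1
    exact zero_ne_one h1
  · rintro ⟨h0, h1, h2⟩; exact ⟨h1, h2⟩

lemma col_zero_sum : (∑ j : ZMod p, T p F 0 j) + 1 = K0 p F := by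
  rw [← fiber_card p F 0]
  have h0mem : (0 : F) ∈ (univ : Finset F).filter (fun x => tr p F x = (0:ZMod p)) := by
    simp [tr_zero]
  have herase : ((univ : Finset F).filter (fun x => tr p F x = (0:ZMod p))).card
      = (((univ : Finset F).filter (fun x => tr p F x = (0:ZMod p))).erase 0).card + 1 :=
    (Finset.card_erase_add_one h0mem).symm
  rw [herase]
  congr 1
  have h := Finset.card_eq_sum_card_fiberwise
    (f := fun x : F => tr p F x⁻¹)
    (s := ((univ : Finset F).filter (fun x => tr p F x = (0:ZMod p))).erase 0) (t := univ)
    (fun x _ => mem_univ _)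
  rw [h]
  refine Finset.sum_congr rfl fun j _ => ?_
  unfold T
  congr 1
  ext x
  simp only [Finset.mem_erase, mem_filter, mem_univ, true_and]
  tauto

/-- The main character-sum evaluation. -/
lemma eval (u : ZMod p) (hu : u ≠ 0) :
    ∑ i : ZMod p, ∑ j : ZMod p, (T p F i j : ℂ) * ZMod.stdAddChar (i + u * j)
    = (T p F 0 0 : ℂ) - 2 * (T p F 0 1 : ℂ)
      + ∑ s ∈ (univ \ {0} : Finset (ZMod p)),
          kloosterman p (u * s) * (T p F 1 s : ℂ) := by
  rw [split_sum]
  -- the i = 0 block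
  have h1 : ∑ j : ZMod p, (T p F 0 j : ℂ) * ZMod.stdAddChar (0 + u * j)
      = (T p F 0 0 : ℂ) - (T p F 0 1 : ℂ) := by
    rw [split_sum]
    have hz : ((T p F 0 0 : ℂ)) * ZMod.stdAddChar (0 + u * 0) = (T p F 0 0 : ℂ) := by
      simp
    rw [hz]
    have : ∑ j ∈ (univ \ {0} : Finset (ZMod p)),
        (T p F 0 j : ℂ) * ZMod.stdAddChar (0 + u * j)
        = (T p F 0 1 : ℂ) * ∑ j ∈ (univ \ {0} : Finset (ZMod p)),
            ZMod.stdAddChar (u * j) := by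
      rw [Finset.mul_sum]
      refine Finset.sum_congr rfl fun j hj => ?_
      have hj0 : j ≠ 0 := by
        rcases Finset.mem_sdiff.mp hj with ⟨_, h2⟩
        simpa using h2
      rw [T_zero_col p F j hj0, zero_add]
    rw [this, sum_psi_sdiff p hu]
    ring
  rw [h1]
  -- the i ≠ 0 block
  have h2 : ∑ i ∈ (univ \ {0} : Finset (ZMod p)),
      ∑ j : ZMod p, (T p F i j : ℂ) * ZMod.stdAddChar (i + u * j)
      = -(T p F 0 1 : ℂ) + ∑ s ∈ (univ \ {0} : Finset (ZMod p)),
          kloosterman p (u * s) * (T p F 1 s : ℂ) := by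
    have hinner : ∀ i ∈ (univ \ {0} : Finset (ZMod p)),
        ∑ j : ZMod p, (T p F i j : ℂ) * ZMod.stdAddChar (i + u * j)
        = (T p F 0 1 : ℂ) * ZMod.stdAddChar (1 * i)
          + ∑ s ∈ (univ \ {0} : Finset (ZMod p)),
              (T p F 1 s : ℂ) * ZMod.stdAddChar (i + (u * s) * i⁻¹) := by
      intro i hi
      have hi0 : i ≠ 0 := by
        rcases Finset.mem_sdiff.mp hi with ⟨_, h2⟩
        simpa using h2
      rw [split_sum]
      congr 1
      · rw [T_col_zero p F i hi0]
        simp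
      · refine Finset.sum_nbij' (fun j => i * j) (fun s => i⁻¹ * s) ?_ ?_ ?_ ?_ ?_
        · intro a ha
          rcases Finset.mem_sdiff.mp ha with ⟨_, h2⟩
          simp only [Finset.mem_sdiff, mem_univ, true_and, Finset.mem_singleton] at *
          exact mul_ne_zero hi0 h2
        · intro a ha
          rcases Finset.mem_sdiff.mp ha with ⟨_, h2⟩
          simp only [Finset.mem_sdiff, mem_univ, true_and, Finset.mem_singleton] at *
          exact mul_ne_zero (inv_ne_zero hi0) h2
        · intro a _
          show i⁻¹ * (i * a) = a
          rw [← mul_assoc, inv_mul_cancel₀ hi0, one_mul]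
        · intro a _
          show i * (i⁻¹ * a) = a
          rw [← mul_assoc, mul_inv_cancel₀ hi0, one_mul]
        · intro a ha
          rw [T_row p F i a hi0]
          congr 2
          field_simp
    rw [Finset.sum_congr rfl hinner, Finset.sum_add_distrib]
    congr 1
    · rw [← Finset.mul_sum, sum_psi_sdiff p one_ne_zero, mul_neg_one]
    · rw [Finset.sum_comm]
      refine Finset.sum_congr rfl fun s _ => ?_
      rw [kloosterman_eq, Finset.sum_mul]
      refine Finset.sum_congr rfl fun i _ => ?_
      ring
  rw [h2]
  ring

lemma reindex (f : ZMod p → ℂ) :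
    ∑ s ∈ (univ \ {0} : Finset (ZMod p)), f s
      = ∑ n ∈ Finset.Icc 1 (p - 1), f (n : ZMod p) := by
  have hp1 : 1 < p := (Fact.out : p.Prime).one_lt
  refine Finset.sum_nbij' (fun s => s.val) (fun n => (n : ZMod p)) ?_ ?_ ?_ ?_ ?_
  · intro a ha
    have ha0 : a ≠ 0 := by simpa using (Finset.mem_sdiff.mp ha).2
    rw [Finset.mem_Icc]
    constructor
    · exact Nat.one_le_iff_ne_zero.mpr fun h => ha0 (by
        rwa [ZMod.val_eq_zero] at h)
    · exact Nat.le_sub_one_of_lt (ZMod.val_lt a)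
  · intro n hn
    rw [Finset.mem_Icc] at hn
    simp only [Finset.mem_sdiff, mem_univ, true_and, Finset.mem_singleton]
    intro h
    rw [ZMod.natCast_eq_zero_iff] at h
    have := Nat.le_of_dvd (Nat.lt_of_lt_of_le Nat.zero_lt_one hn.1) h
    omega
  · intro a _
    simp [ZMod.natCast_val, ZMod.cast_id]
  · intro n hn
    rw [Finset.mem_Icc] at hn
    exact ZMod.val_cast_of_lt (by omega)
  · intro a _
    rw [ZMod.natCast_val, ZMod.cast_id]

end KlAux

theorem kloosterman_linear_system (p m : ℕ) [Fact p.Prime] (F : Type*) [Field F] [Fintype F]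
    [DecidableEq F] [Algebra (ZMod p) F] (hq : Fintype.card F = p ^ m)
    (u : ZMod p) (hu : u ≠ 0) :
    (kloostermanExt p F u =
      (Nat.card {x : F | x ≠ 0 ∧ Algebra.trace (ZMod p) F x = 0 ∧
        Algebra.trace (ZMod p) F x⁻¹ = 0} : ℂ) -
      2 * (Nat.card {x : F | x ≠ 0 ∧ Algebra.trace (ZMod p) F x = 0 ∧
        Algebra.trace (ZMod p) F x⁻¹ = 1} : ℂ) +
      ∑ s ∈ Finset.Icc 1 (p - 1), kloosterman p (u * s) *
        (Nat.card {x : F | x ≠ 0 ∧ Algebra.trace (ZMod p) F x = 1 ∧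
          Algebra.trace (ZMod p) F x⁻¹ = (s : ZMod p)} : ℂ)) ∧
    (∑ s ∈ Finset.Icc 1 (p - 1), (kloosterman p (u * s) + p + 1) *
        (Nat.card {x : F | x ≠ 0 ∧ Algebra.trace (ZMod p) F x = 1 ∧
          Algebra.trace (ZMod p) F x⁻¹ = (s : ZMod p)} : ℂ) =
      kloostermanExt p F u + (p : ℂ) ^ m + 1) := by
  have hp1 : 1 < p := (Fact.out : p.Prime).one_lt
  simp only [KlAux.natCard_eq_T p F]
  -- Part 1
  have htr : ∀ x : F, KlAux.tr p F (x + algebraMap (ZMod p) F u * x⁻¹)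
      = KlAux.tr p F x + u * KlAux.tr p F x⁻¹ := fun x => by rw [KlAux.tr_add, KlAux.tr_smul]
  have hA : kloostermanExt p F u = ∑ x ∈ (univ \ {0} : Finset F),
      ZMod.stdAddChar (KlAux.tr p F x + u * KlAux.tr p F x⁻¹) := by
    unfold kloostermanExt
    refine Finset.sum_congr rfl fun x _ => ?_
    rw [KlAux.psi_apply, ← htr x]
    rfl
  have part1 : kloostermanExt p F u = (KlAux.T p F 0 0 : ℂ) - 2 * (KlAux.T p F 0 1 : ℂ)
      + ∑ s ∈ Finset.Icc 1 (p - 1),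
          kloosterman p (u * (s : ZMod p)) * (KlAux.T p F 1 (s : ZMod p) : ℂ) := by
    rw [hA, KlAux.sum_fiber p F (fun i j => ZMod.stdAddChar (i + u * j)), KlAux.eval p F u hu,
      KlAux.reindex p (fun s => kloosterman p (u * s) * (KlAux.T p F 1 s : ℂ))]
  refine ⟨part1, ?_⟩
  -- Part 2
  set a : ℂ := (KlAux.T p F 0 0 : ℂ) with ha
  set b : ℂ := (KlAux.T p F 0 1 : ℂ) with hb
  set S2 : ℂ := ∑ s ∈ Finset.Icc 1 (p - 1), (KlAux.T p F 1 (s : ZMod p) : ℂ) with hS2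
  have e1 : b + S2 = (KlAux.K0 p F : ℂ) := by
    have h := KlAux.row_one_sum p F
    have hc : (∑ j : ZMod p, (KlAux.T p F 1 j : ℂ)) = (KlAux.K0 p F : ℂ) := by
      rw [← Nat.cast_sum]
      exact_mod_cast congrArg (Nat.cast : ℕ → ℂ) h
    rw [KlAux.split_sum] at hc
    rw [KlAux.T_col_zero p F 1 one_ne_zero, ← hb,
      KlAux.reindex p (fun s => (KlAux.T p F 1 s : ℂ))] at hc
    rw [hS2]
    exact hc
  have e2 : a + ((p : ℂ) - 1) * b + 1 = (KlAux.K0 p F : ℂ) := by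
    have h := KlAux.col_zero_sum p F
    have hc : (∑ j : ZMod p, (KlAux.T p F 0 j : ℂ)) + 1 = (KlAux.K0 p F : ℂ) := by
      rw [← Nat.cast_sum]
      exact_mod_cast congrArg (Nat.cast : ℕ → ℂ) h
    rw [KlAux.split_sum] at hc
    have hconst : ∑ j ∈ (univ \ {0} : Finset (ZMod p)), (KlAux.T p F 0 j : ℂ)
        = ((p : ℂ) - 1) * b := by
      rw [Finset.sum_congr rfl (fun j hj => by
        rw [KlAux.T_zero_col p F j (by simpa using (Finset.mem_sdiff.mp hj).2)] :
        ∀ j ∈ (univ \ {0} : Finset (ZMod p)), (KlAux.T p F 0 j : ℂ) = (KlAux.T p F 0 1 : ℂ)),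
        Finset.sum_const, nsmul_eq_mul]
      congr 1
      rw [Finset.card_sdiff_of_subset (by simp), Finset.card_univ, ZMod.card,
        Finset.card_singleton]
      push_cast [Nat.cast_sub (le_of_lt hp1)]
      ring
    rw [hconst] at hc
    exact hc
  have e3 : (p : ℂ) * (KlAux.K0 p F : ℂ) = (p : ℂ) ^ m := by
    have h := KlAux.mul_K0 p F
    rw [hq] at h
    exact_mod_cast congrArg (Nat.cast : ℕ → ℂ) h
  have expand : ∑ s ∈ Finset.Icc 1 (p - 1),
      (kloosterman p (u * (s : ZMod p)) + p + 1) * (KlAux.T p F 1 (s : ZMod p) : ℂ)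
      = (∑ s ∈ Finset.Icc 1 (p - 1),
          kloosterman p (u * (s : ZMod p)) * (KlAux.T p F 1 (s : ZMod p) : ℂ))
        + ((p : ℂ) + 1) * S2 := by
    rw [hS2, Finset.mul_sum, ← Finset.sum_add_distrib]
    refine Finset.sum_congr rfl fun s _ => ?_
    ring
  rw [expand, part1]
  linear_combination ((p : ℂ) + 1) * e1 - e2 + e3
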